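/- Let $a_1>a_2$, $b_1>b_2$, $t\in(0,1)$, $p_1,p_2\in(0,1)$ with large separation $(a_1-a_2)(b_1-b_2)>(\sqrt{p_1}+\sqrt{p_2})^2$ and $T=1$, and let $x_0$ be as above. Then $\sqrt{(\alpha_1-x_0)(\beta_1-x_0)}+\sqrt{(x_0-\alpha_2)(x_0-\beta_2)} > |(1-t)(a_1-a_2)-t(b_1-b_2)|$. -/

import Mathlib

theorem stmt_5 (a₁ a₂ b₁ b₂ t p₁ p₂ : ℝ) (ha : a₁ > a₂) (hb : b₁ > b₂)
    (ht : t ∈ Set.Ioo (0:ℝ) 1) (hp₁ : p₁ ∈ Set.Ioo (0:ℝ) 1) (hp₂ : p₂ ∈ Set.Ioo (0:ℝ) 1)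
    (hsep : (a₁ - a₂) * (b₁ - b₂) > (Real.sqrt p₁ + Real.sqrt p₂) ^ 2)
    (α₁ β₁ α₂ β₂ x₀ : ℝ)
    (hα₁ : α₁ = (1 - t) * a₁ + t * b₁ - Real.sqrt (4 * p₁ * t * (1 - t)))
    (hβ₁ : β₁ = (1 - t) * a₁ + t * b₁ + Real.sqrt (4 * p₁ * t * (1 - t)))
    (hα₂ : α₂ = (1 - t) * a₂ + t * b₂ - Real.sqrt (4 * p₂ * t * (1 - t)))
    (hβ₂ : β₂ = (1 - t) * a₂ + t * b₂ + Real.sqrt (4 * p₂ * t * (1 - t)))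
    (hx₀ : x₀ = Real.sqrt p₁ / (Real.sqrt p₁ + Real.sqrt p₂) * ((α₂ + β₂) / 2)
        + Real.sqrt p₂ / (Real.sqrt p₁ + Real.sqrt p₂) * ((α₁ + β₁) / 2)) :
    Real.sqrt ((α₁ - x₀) * (β₁ - x₀)) + Real.sqrt ((x₀ - α₂) * (x₀ - β₂)) >
      |(1 - t) * (a₁ - a₂) - t * (b₁ - b₂)| := by
  obtain ⟨ht0, ht1⟩ := ht
  obtain ⟨hp10, hp11⟩ := hp₁
  obtain ⟨hp20, hp21⟩ := hp₂
  have h1t : (0:ℝ) < 1 - t := by linarith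
  have hsp1 : Real.sqrt p₁ > 0 := Real.sqrt_pos.2 hp10
  have hsp2 : Real.sqrt p₂ > 0 := Real.sqrt_pos.2 hp20
  set S : ℝ := Real.sqrt p₁ + Real.sqrt p₂ with hSdef
  have hS0 : S > 0 := by positivity
  have hq1 : Real.sqrt p₁ ^ 2 = p₁ := Real.sq_sqrt hp10.le
  have hq2 : Real.sqrt p₂ ^ 2 = p₂ := Real.sq_sqrt hp20.le
  have hs1 : Real.sqrt (4 * p₁ * t * (1 - t)) ^ 2 = 4 * p₁ * t * (1 - t) :=
    Real.sq_sqrt (by positivity)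
  have hs2 : Real.sqrt (4 * p₂ * t * (1 - t)) ^ 2 = 4 * p₂ * t * (1 - t) :=
    Real.sq_sqrt (by positivity)
  set c₁ : ℝ := (1 - t) * a₁ + t * b₁ with hc1
  set c₂ : ℝ := (1 - t) * a₂ + t * b₂ with hc2
  set D : ℝ := (1 - t) * (a₁ - a₂) + t * (b₁ - b₂) with hD
  have hDc : c₁ - c₂ = D := by rw [hc1, hc2, hD]; ring
  set E : ℝ := D ^ 2 - 4 * t * (1 - t) * S ^ 2 with hE
  set X : ℝ := (1 - t) * (a₁ - a₂) - t * (b₁ - b₂) with hX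
  have hEX : E > X ^ 2 := by
    have key : E - X ^ 2 = 4 * t * (1 - t) * ((a₁ - a₂) * (b₁ - b₂) - S ^ 2) := by
      rw [hE, hX, hD]; ring
    nlinarith [mul_pos (mul_pos (mul_pos (by norm_num : (0:ℝ) < 4) ht0) h1t)
      (by linarith : (0:ℝ) < (a₁ - a₂) * (b₁ - b₂) - S ^ 2)]
  have hE0 : 0 ≤ E := le_of_lt (lt_of_le_of_lt (sq_nonneg X) hEX)
  have hsE : Real.sqrt E ^ 2 = E := Real.sq_sqrt hE0
  have hx : x₀ = (Real.sqrt p₁ * c₂ + Real.sqrt p₂ * c₁) / S := by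
    rw [hx₀, hα₁, hβ₁, hα₂, hβ₂, hc1, hc2]
    field_simp
    ring
  have hc1x : c₁ - x₀ = Real.sqrt p₁ * D / S := by
    rw [hx, ← hDc]
    field_simp
    ring
  have hc2x : x₀ - c₂ = Real.sqrt p₂ * D / S := by
    rw [hx, ← hDc]
    field_simp
    ring
  have hprod1 : (α₁ - x₀) * (β₁ - x₀) = (Real.sqrt p₁ * Real.sqrt E / S) ^ 2 := by
    have step : (α₁ - x₀) * (β₁ - x₀)
        = (c₁ - x₀) ^ 2 - Real.sqrt (4 * p₁ * t * (1 - t)) ^ 2 := by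
      rw [hα₁, hβ₁]; ring
    rw [step, hs1, hc1x]
    field_simp
    rw [hq1, hsE, hE]
    ring
  have hprod2 : (x₀ - α₂) * (x₀ - β₂) = (Real.sqrt p₂ * Real.sqrt E / S) ^ 2 := by
    have step : (x₀ - α₂) * (x₀ - β₂)
        = (x₀ - c₂) ^ 2 - Real.sqrt (4 * p₂ * t * (1 - t)) ^ 2 := by
      rw [hα₂, hβ₂]; ring
    rw [step, hs2, hc2x]
    field_simp
    rw [hq2, hsE, hE]
    ring
  have hsqrt1 : Real.sqrt ((α₁ - x₀) * (β₁ - x₀)) = Real.sqrt p₁ * Real.sqrt E / S := by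
    rw [hprod1, Real.sqrt_sq (by positivity)]
  have hsqrt2 : Real.sqrt ((x₀ - α₂) * (x₀ - β₂)) = Real.sqrt p₂ * Real.sqrt E / S := by
    rw [hprod2, Real.sqrt_sq (by positivity)]
  rw [hsqrt1, hsqrt2]
  have hsum : Real.sqrt p₁ * Real.sqrt E / S + Real.sqrt p₂ * Real.sqrt E / S
      = Real.sqrt E := by field_simp; ring
  rw [hsum]
  calc |X| = Real.sqrt (X ^ 2) := (Real.sqrt_sq_eq_abs X).symm
    _ < Real.sqrt E := Real.sqrt_lt_sqrt (sq_nonneg X) hEX
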